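/- Let (x^k, u^k) be NCS iterates and let x⋆ be a primal solution with dual certificate u⋆. Then for every k ≥ 0, D²(x^{k+1} − x⋆, u^{k+1} − u⋆) ≤ D²(x^k − x⋆, u^k − u⋆) − D²(x^{k+1} − x^k, u^{k+1} − u^k). -/

import Mathlib

open Matrix

-- Moore–Penrose pseudoinverse, characterized by the four Penrose conditions
-- (which determine it uniquely when a solution exists).
open Classical in
noncomputable def mpInv {k l : ℕ} (A : Matrix (Fin k) (Fin l) ℝ) : Matrix (Fin l) (Fin k) ℝ :=
  if h : ∃ X : Matrix (Fin l) (Fin k) ℝ,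
      A * X * A = A ∧ X * A * X = X ∧ (A * X)ᵀ = A * X ∧ (X * A)ᵀ = X * A
  then h.choose else 0

-- `ProxRel g α z u'` says that `u' = prox_{αg*}(z)`, i.e. that
-- `α⁻¹ (z - u')` is a minimizer of `x ↦ g(x) + (α/2)‖x - z/α‖²`
-- (by Moreau's identity `prox_{αg*}(z) = z - α argmin_x {g(x) + (α/2)‖x - z/α‖²}`).
def ProxRel {m : ℕ} (g : (Fin m → ℝ) → ℝ) (α : ℝ) (z u' : Fin m → ℝ) : Prop :=
  IsMinOn (fun y : Fin m → ℝ => g y + (α / 2) * ((y - α⁻¹ • z) ⬝ᵥ (y - α⁻¹ • z)))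
    Set.univ (α⁻¹ • (z - u'))

/-- The squared seminorm `D²(x, u) = ‖u − αAx‖² + ‖x‖²_{αM − α²AᵀA}`. -/
noncomputable def Dsq {m n : ℕ} (A : Matrix (Fin m) (Fin n) ℝ) (α : ℝ)
    (M : Matrix (Fin n) (Fin n) ℝ) (x : Fin n → ℝ) (u : Fin m → ℝ) : ℝ :=
  (u - α • (A *ᵥ x)) ⬝ᵥ (u - α • (A *ᵥ x)) +
    x ⬝ᵥ ((α • M - α ^ 2 • (Aᵀ * A)) *ᵥ x)

/-- The seminorm `D(x, u) = (‖u − αAx‖² + ‖x‖²_{αM − α²AᵀA})^{1/2}`. -/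
noncomputable def Dnorm {m n : ℕ} (A : Matrix (Fin m) (Fin n) ℝ) (α : ℝ)
    (M : Matrix (Fin n) (Fin n) ℝ) (x : Fin n → ℝ) (u : Fin m → ℝ) : ℝ :=
  Real.sqrt (Dsq A α M x u)

/- ### Auxiliary lemmas -/

lemma exists_penrose {n : ℕ} (M : Matrix (Fin n) (Fin n) ℝ) (hM : Mᵀ = M) :
    ∃ X : Matrix (Fin n) (Fin n) ℝ,
      M * X * M = M ∧ X * M * X = X ∧ (M * X)ᵀ = M * X ∧ (X * M)ᵀ = X * M := by
  have hct : ∀ (N : Matrix (Fin n) (Fin n) ℝ), Nᴴ = Nᵀ := fun N => by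
    ext i j; simp [Matrix.conjTranspose_apply]
  have hA : M.IsHermitian := by rw [Matrix.IsHermitian, hct, hM]
  set U : Matrix (Fin n) (Fin n) ℝ := (hA.eigenvectorUnitary : Matrix (Fin n) (Fin n) ℝ) with hU
  set d : Fin n → ℝ := hA.eigenvalues with hd
  have hUU : star U * U = 1 := (Matrix.mem_unitaryGroup_iff').mp hA.eigenvectorUnitary.2
  have hspec : M = U * diagonal d * star U := by
    have := hA.spectral_theorem
    simpa using this
  have key : ∀ v w : Fin n → ℝ,
      (U * diagonal v * star U) * (U * diagonal w * star U) =
        U * diagonal (fun i => v i * w i) * star U := by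
    intro v w
    have h1 : star U * (U * (diagonal w * star U)) = diagonal w * star U := by
      rw [← mul_assoc, hUU, one_mul]
    simp only [mul_assoc, h1]
    rw [← mul_assoc (diagonal v), diagonal_mul_diagonal]
  have symm_key : ∀ v : Fin n → ℝ, (U * diagonal v * star U)ᵀ = U * diagonal v * star U := by
    intro v
    rw [← hct]
    simp [conjTranspose_mul, Matrix.star_eq_conjTranspose, diagonal_conjTranspose, mul_assoc]
  refine ⟨U * diagonal (fun i => (d i)⁻¹) * star U, ?_, ?_, ?_, ?_⟩
  · rw [hspec, key, key]
    congr 1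
    congr 1
    funext i
    rcases eq_or_ne (d i) 0 with h | h <;> field_simp [h]
  · rw [hspec, key, key]
    congr 1
    congr 1
    funext i
    rcases eq_or_ne (d i) 0 with h | h <;> field_simp [h]
  · rw [hspec, key, symm_key]
  · rw [hspec, key, symm_key]

lemma dps_nonneg {n : ℕ} (v : Fin n → ℝ) : 0 ≤ v ⬝ᵥ v :=
  Finset.sum_nonneg fun _ _ => mul_self_nonneg _

lemma dot_mulVec_symm {n : ℕ} (N : Matrix (Fin n) (Fin n) ℝ) (hN : Nᵀ = N)
    (a c : Fin n → ℝ) : a ⬝ᵥ (N *ᵥ c) = c ⬝ᵥ (N *ᵥ a) := by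
  rw [dotProduct_mulVec, ← hN, vecMul_transpose, hN, dotProduct_comm]

lemma dot_transpose {m n : ℕ} (A : Matrix (Fin m) (Fin n) ℝ) (a : Fin n → ℝ) (c : Fin m → ℝ) :
    a ⬝ᵥ (Aᵀ *ᵥ c) = (A *ᵥ a) ⬝ᵥ c := by
  rw [dotProduct_mulVec, vecMul_transpose]

lemma kerM_sub_kerA {m n : ℕ} (A : Matrix (Fin m) (Fin n) ℝ) (α : ℝ) (hα : 0 < α)
    (M : Matrix (Fin n) (Fin n) ℝ)
    (hMpsd : (M - α • (Aᵀ * A)).PosSemidef) (w : Fin n → ℝ) (hw : M *ᵥ w = 0) :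
    A *ᵥ w = 0 := by
  have h := hMpsd.dotProduct_mulVec_nonneg w
  have hstar : star w = w := by simp
  rw [hstar, sub_mulVec, hw, smul_mulVec, ← mulVec_mulVec, dotProduct_sub,
    dotProduct_zero, dotProduct_smul, dot_transpose, smul_eq_mul] at h
  have h2 : (A *ᵥ w) ⬝ᵥ (A *ᵥ w) ≤ 0 := by nlinarith
  exact dotProduct_self_eq_zero.mp (le_antisymm h2 (dps_nonneg _))

lemma mpInv_range {m n : ℕ} (A : Matrix (Fin m) (Fin n) ℝ) (α : ℝ) (hα : 0 < α)
    (M : Matrix (Fin n) (Fin n) ℝ) (hM : Mᵀ = M)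
    (hMpsd : (M - α • (Aᵀ * A)).PosSemidef) (v : Fin m → ℝ) :
    M *ᵥ (mpInv M *ᵥ (Aᵀ *ᵥ v)) = Aᵀ *ᵥ v := by
  have hex := exists_penrose M hM
  rw [mpInv, dif_pos hex]
  obtain ⟨h1, h2, h3, h4⟩ := hex.choose_spec
  set X := hex.choose with hX
  set w : Fin n → ℝ := Aᵀ *ᵥ v - M *ᵥ (X *ᵥ (Aᵀ *ᵥ v)) with hw
  have hMP : M * (1 - M * X) = 0 := by
    have hPM : (1 - M * X) * M = 0 := by
      rw [sub_mul, one_mul, mul_assoc, ← mul_assoc M X M, h1, sub_self]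
    have hT : ((1 - M * X) * M)ᵀ = Mᵀ * (1 - M * X)ᵀ := transpose_mul _ _
    rw [hPM, transpose_zero, hM, transpose_sub, transpose_one, h3] at hT
    exact hT.symm
  have hw2 : w = (1 - M * X) *ᵥ (Aᵀ *ᵥ v) := by
    rw [sub_mulVec, one_mulVec, hw, mulVec_mulVec]
  have hMw : M *ᵥ w = 0 := by
    rw [hw2, mulVec_mulVec, hMP, zero_mulVec]
  have hAw : A *ᵥ w = 0 := kerM_sub_kerA A α hα M hMpsd w hMw
  have hdot : w ⬝ᵥ w = 0 := by
    rw [show w ⬝ᵥ w = w ⬝ᵥ (Aᵀ *ᵥ v - M *ᵥ (X *ᵥ (Aᵀ *ᵥ v))) from by rw [← hw],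
      dotProduct_sub, dot_transpose, hAw, zero_dotProduct,
      dot_mulVec_symm M hM, hMw, dotProduct_zero, sub_zero]
  have hw0 : w = 0 := dotProduct_self_eq_zero.mp hdot
  have hfin : Aᵀ *ᵥ v - M *ᵥ (X *ᵥ (Aᵀ *ᵥ v)) = 0 := by rw [← hw]; exact hw0
  exact (sub_eq_zero.mp hfin).symm

lemma prox_subgrad {m : ℕ} (g : (Fin m → ℝ) → ℝ) (hg : ConvexOn ℝ Set.univ g)
    (α : ℝ) (hα : 0 < α) (z u' : Fin m → ℝ) (h : ProxRel g α z u') (y : Fin m → ℝ) :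
    g (α⁻¹ • (z - u')) + u' ⬝ᵥ (y - α⁻¹ • (z - u')) ≤ g y := by
  have hmain : ∀ t : ℝ, 0 < t → t ≤ 1 →
      0 ≤ t * (g y - g (α⁻¹ • (z - u'))) - t * (u' ⬝ᵥ (y - α⁻¹ • (z - u')))
        + (α/2) * t^2 * ((y - α⁻¹ • (z - u')) ⬝ᵥ (y - α⁻¹ • (z - u'))) := by
    intro t ht ht1
    have hyt := isMinOn_iff.mp h
      (α⁻¹ • (z - u') + t • (y - α⁻¹ • (z - u'))) (Set.mem_univ _)
    have hconv := hg.2 (Set.mem_univ (α⁻¹ • (z - u'))) (Set.mem_univ y)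
      (by linarith : (0:ℝ) ≤ 1 - t) (le_of_lt ht) (by ring)
    rw [show (1 - t) • (α⁻¹ • (z - u')) + t • y
        = α⁻¹ • (z - u') + t • (y - α⁻¹ • (z - u')) from by module,
      smul_eq_mul, smul_eq_mul] at hconv
    have hq : ((α⁻¹ • (z - u') + t • (y - α⁻¹ • (z - u'))) - α⁻¹ • z) ⬝ᵥ
        ((α⁻¹ • (z - u') + t • (y - α⁻¹ • (z - u'))) - α⁻¹ • z)
        = (α⁻¹ • (z - u') - α⁻¹ • z) ⬝ᵥ (α⁻¹ • (z - u') - α⁻¹ • z)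
          + 2 * t * ((α⁻¹ • (z - u') - α⁻¹ • z) ⬝ᵥ (y - α⁻¹ • (z - u')))
          + t^2 * ((y - α⁻¹ • (z - u')) ⬝ᵥ (y - α⁻¹ • (z - u'))) := by
      rw [show (α⁻¹ • (z - u') + t • (y - α⁻¹ • (z - u'))) - α⁻¹ • z
          = (α⁻¹ • (z - u') - α⁻¹ • z) + t • (y - α⁻¹ • (z - u')) from by abel]
      simp only [dotProduct_add, add_dotProduct, dotProduct_smul, smul_dotProduct,
        smul_eq_mul]
      rw [dotProduct_comm (y - α⁻¹ • (z - u')) (α⁻¹ • (z - u') - α⁻¹ • z)]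
      ring
    rw [hq] at hyt
    have hcross : α * ((α⁻¹ • (z - u') - α⁻¹ • z) ⬝ᵥ (y - α⁻¹ • (z - u')))
        = -(u' ⬝ᵥ (y - α⁻¹ • (z - u'))) := by
      rw [← smul_eq_mul, ← smul_dotProduct,
        show α • (α⁻¹ • (z - u') - α⁻¹ • z) = -u' from by
          rw [smul_sub, smul_smul, smul_smul, mul_inv_cancel₀ hα.ne', one_smul, one_smul]
          abel,
        neg_dotProduct]
    nlinarith [hyt, hconv, hcross]
  by_contra hlt
  push_neg at hlt
  obtain ⟨C, hC⟩ : ∃ C : ℝ, C = g (α⁻¹ • (z - u')) + u' ⬝ᵥ (y - α⁻¹ • (z - u')) - g y :=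
    ⟨_, rfl⟩
  obtain ⟨K, hK⟩ : ∃ K : ℝ,
      K = (α/2) * ((y - α⁻¹ • (z - u')) ⬝ᵥ (y - α⁻¹ • (z - u'))) := ⟨_, rfl⟩
  have hCpos : 0 < C := by rw [hC]; linarith
  have hKnn : 0 ≤ K := by
    rw [hK]; have := dps_nonneg (y - α⁻¹ • (z - u')); positivity
  obtain ⟨t, ht⟩ : ∃ t : ℝ, t = min 1 (C / (2 * (K + 1))) := ⟨_, rfl⟩
  have htpos : 0 < t := by rw [ht]; exact lt_min one_pos (by positivity)
  have ht1 : t ≤ 1 := by rw [ht]; exact min_le_left _ _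
  have ht2 : t ≤ C / (2 * (K + 1)) := by rw [ht]; exact min_le_right _ _
  have hKt : K * t ≤ C / 2 := by
    have h3 : K * t ≤ (K + 1) * (C / (2 * (K + 1))) :=
      mul_le_mul (by linarith) ht2 (le_of_lt htpos) (by linarith)
    have h4 : (K + 1) * (C / (2 * (K + 1))) = C / 2 := by field_simp
    linarith
  have h2 := hmain t htpos ht1
  have h5 : 0 ≤ t * (-C + K * t) := by
    have heq : t * (g y - g (α⁻¹ • (z - u'))) - t * (u' ⬝ᵥ (y - α⁻¹ • (z - u')))
        + (α/2) * t^2 * ((y - α⁻¹ • (z - u')) ⬝ᵥ (y - α⁻¹ • (z - u')))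
        = t * (-C + K * t) := by
      rw [hC, hK]; ring
    linarith [heq.le, heq.ge]
  have h6 : 0 < C - K * t := by linarith
  nlinarith [mul_pos htpos h6, h5]

lemma dps_sub {n : ℕ} (a b : Fin n → ℝ) :
    (a - b) ⬝ᵥ (a - b) = a ⬝ᵥ a + b ⬝ᵥ b - 2 * (a ⬝ᵥ b) := by
  rw [dotProduct_sub, sub_dotProduct, sub_dotProduct, dotProduct_comm b a]; ring

lemma dps_sub_symm {n : ℕ} (N : Matrix (Fin n) (Fin n) ℝ) (hN : Nᵀ = N) (a b : Fin n → ℝ) :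
    (a - b) ⬝ᵥ (N *ᵥ (a - b)) = a ⬝ᵥ (N *ᵥ a) + b ⬝ᵥ (N *ᵥ b) - 2 * (a ⬝ᵥ (N *ᵥ b)) := by
  rw [mulVec_sub, dotProduct_sub, sub_dotProduct, sub_dotProduct, dot_mulVec_symm _ hN b a]
  ring

lemma Dsq_sub_expand {m n : ℕ} (A : Matrix (Fin m) (Fin n) ℝ) (α : ℝ)
    (M : Matrix (Fin n) (Fin n) ℝ) (hMsymm : Mᵀ = M)
    (x1 x2 : Fin n → ℝ) (u1 u2 : Fin m → ℝ) :
    Dsq A α M (x1 - x2) (u1 - u2)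
      = Dsq A α M x1 u1 + Dsq A α M x2 u2
        - 2 * (((u1 - α • (A *ᵥ x1)) ⬝ᵥ (u2 - α • (A *ᵥ x2)))
          + x1 ⬝ᵥ ((α • M - α ^ 2 • (Aᵀ * A)) *ᵥ x2)) := by
  have hNsym : (α • M - α ^ 2 • (Aᵀ * A))ᵀ = α • M - α ^ 2 • (Aᵀ * A) := by
    rw [transpose_sub, transpose_smul, transpose_smul, hMsymm, transpose_mul,
      transpose_transpose]
  unfold Dsq
  have e1 : (u1 - u2) - α • (A *ᵥ (x1 - x2))
      = (u1 - α • (A *ᵥ x1)) - (u2 - α • (A *ᵥ x2)) := by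
    rw [mulVec_sub, smul_sub]; abel
  rw [e1, dps_sub, dps_sub_symm _ hNsym]
  ring

theorem ncs_fejer
    {m n : ℕ}
    (A : Matrix (Fin m) (Fin n) ℝ) (b : Fin m → ℝ)
    (α : ℝ) (hα : 0 < α)
    (g : (Fin m → ℝ) → ℝ) (hg : ConvexOn ℝ Set.univ g)
    (M : Matrix (Fin n) (Fin n) ℝ) (hMsymm : Mᵀ = M)
    (hMpsd : (M - α • (Aᵀ * A)).PosSemidef)
    -- NCS iterates:
    (x : ℕ → Fin n → ℝ) (u : ℕ → Fin m → ℝ)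
    (hx : ∀ k, x (k + 1) = x k - mpInv M *ᵥ (Aᵀ *ᵥ u k))
    (hu : ∀ k, ProxRel g α
      (u k + α • (A *ᵥ ((2 : ℝ) • x (k + 1) - x k) - b)) (u (k + 1)))
    -- a primal solution x⋆ with dual certificate u⋆:
    (xs : Fin n → ℝ) (us : Fin m → ℝ)
    (hxs : ∀ y, g (A *ᵥ xs - b) ≤ g (A *ᵥ y - b))
    (hus : Aᵀ *ᵥ us = 0)
    (hsub : ∀ y, g (A *ᵥ xs - b) + us ⬝ᵥ (y - (A *ᵥ xs - b)) ≤ g y) :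
    ∀ k : ℕ,
      Dsq A α M (x (k + 1) - xs) (u (k + 1) - us) ≤
        Dsq A α M (x k - xs) (u k - us) -
          Dsq A α M (x (k + 1) - x k) (u (k + 1) - u k) := by
  intro k
  -- the prox output point
  obtain ⟨Y, hY⟩ : ∃ Y : Fin m → ℝ,
      Y = α⁻¹ • ((u k + α • (A *ᵥ ((2 : ℝ) • x (k + 1) - x k) - b)) - u (k + 1)) := ⟨_, rfl⟩
  -- subgradient inequality at the prox point
  have hs1 := prox_subgrad g hg α hα _ _ (hu k) (A *ᵥ xs - b)
  have hs2 := hsub (α⁻¹ • ((u k + α • (A *ᵥ ((2 : ℝ) • x (k + 1) - x k) - b)) - u (k + 1)))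
  rw [← hY] at hs1 hs2
  -- monotonicity
  have hmono : 0 ≤ (u (k + 1) - us) ⬝ᵥ (Y - (A *ᵥ xs - b)) := by
    rw [show (A *ᵥ xs - b) - Y = -(Y - (A *ᵥ xs - b)) from by abel, dotProduct_neg] at hs1
    rw [sub_dotProduct]
    linarith
  -- x-update identity
  have hstep : M *ᵥ (x (k + 1) - x k) = -(Aᵀ *ᵥ u k) := by
    rw [hx k, show x k - mpInv M *ᵥ (Aᵀ *ᵥ u k) - x k
        = -(mpInv M *ᵥ (Aᵀ *ᵥ u k)) from by abel, mulVec_neg,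
      mpInv_range A α hα M hMsymm hMpsd]
  -- u-update identity
  have hαY : α • Y = u k + α • (A *ᵥ ((2 : ℝ) • x (k + 1) - x k) - b) - u (k + 1) := by
    rw [hY, smul_smul, mul_inv_cancel₀ hα.ne', one_smul]
  have hG : u (k + 1) - u k = α • (A *ᵥ ((2 : ℝ) • x (k + 1) - x k) - b) - α • Y := by
    rw [hαY]; abel
  -- key vector identity
  have hvec : (u (k + 1) - u k) - α • (A *ᵥ (x (k + 1) - x k)) - α • (A *ᵥ (x (k + 1) - xs))
      = -(α • (Y - (A *ᵥ xs - b))) := by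
    rw [hG]
    simp only [mulVec_sub, mulVec_smul, smul_sub]
    module
  -- scalar consequence of hvec
  have hscal : (u (k + 1) - us) ⬝ᵥ
        ((u (k + 1) - u k) - α • (A *ᵥ (x (k + 1) - x k)) - α • (A *ᵥ (x (k + 1) - xs)))
      = -(α * ((u (k + 1) - us) ⬝ᵥ (Y - (A *ᵥ xs - b)))) := by
    rw [hvec, dotProduct_neg, dotProduct_smul, smul_eq_mul]
  -- orthogonality of us
  have h0 : (A *ᵥ (x (k + 1) - xs)) ⬝ᵥ us = 0 := by
    rw [← dot_transpose, hus, dotProduct_zero]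
  -- second term of the cross product
  have t2 : (x (k + 1) - xs) ⬝ᵥ ((α • M - α ^ 2 • (Aᵀ * A)) *ᵥ (x (k + 1) - x k))
      = α * ((x (k + 1) - xs) ⬝ᵥ (M *ᵥ (x (k + 1) - x k)))
        - α ^ 2 * ((A *ᵥ (x (k + 1) - xs)) ⬝ᵥ (A *ᵥ (x (k + 1) - x k))) := by
    rw [sub_mulVec, smul_mulVec, smul_mulVec, dotProduct_sub,
      dotProduct_smul, dotProduct_smul, smul_eq_mul, smul_eq_mul,
      ← mulVec_mulVec, dot_transpose]
  have t3 : (x (k + 1) - xs) ⬝ᵥ (M *ᵥ (x (k + 1) - x k))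
      = -((A *ᵥ (x (k + 1) - xs)) ⬝ᵥ (u k - us)) := by
    rw [hstep, dotProduct_neg, dot_transpose,
      show (A *ᵥ (x (k + 1) - xs)) ⬝ᵥ u k
        = (A *ᵥ (x (k + 1) - xs)) ⬝ᵥ (u k - us) + (A *ᵥ (x (k + 1) - xs)) ⬝ᵥ us from by
        rw [← dotProduct_add]; congr 1; abel, h0, add_zero]
  -- recombination
  have hcomb : (A *ᵥ (x (k + 1) - xs)) ⬝ᵥ (u (k + 1) - u k)
        + (A *ᵥ (x (k + 1) - xs)) ⬝ᵥ (u k - us)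
      = (u (k + 1) - us) ⬝ᵥ (A *ᵥ (x (k + 1) - xs)) := by
    rw [← dotProduct_add, show (u (k + 1) - u k) + (u k - us) = u (k + 1) - us from by abel,
      dotProduct_comm]
  -- the master bound
  have hB : ((u (k + 1) - us) - α • (A *ᵥ (x (k + 1) - xs))) ⬝ᵥ
        ((u (k + 1) - u k) - α • (A *ᵥ (x (k + 1) - x k)))
      + (x (k + 1) - xs) ⬝ᵥ ((α • M - α ^ 2 • (Aᵀ * A)) *ᵥ (x (k + 1) - x k)) ≤ 0 := by
    rw [t2, t3]
    have hexp : ((u (k + 1) - us) - α • (A *ᵥ (x (k + 1) - xs))) ⬝ᵥ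
          ((u (k + 1) - u k) - α • (A *ᵥ (x (k + 1) - x k)))
        = (u (k + 1) - us) ⬝ᵥ (u (k + 1) - u k)
          - α * ((u (k + 1) - us) ⬝ᵥ (A *ᵥ (x (k + 1) - x k)))
          - α * ((A *ᵥ (x (k + 1) - xs)) ⬝ᵥ (u (k + 1) - u k))
          + α ^ 2 * ((A *ᵥ (x (k + 1) - xs)) ⬝ᵥ (A *ᵥ (x (k + 1) - x k))) := by
      simp only [dotProduct_sub, sub_dotProduct, dotProduct_smul, smul_dotProduct,
        smul_eq_mul]
      ring
    have hexp2 : (u (k + 1) - us) ⬝ᵥ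
          ((u (k + 1) - u k) - α • (A *ᵥ (x (k + 1) - x k)) - α • (A *ᵥ (x (k + 1) - xs)))
        = (u (k + 1) - us) ⬝ᵥ (u (k + 1) - u k)
          - α * ((u (k + 1) - us) ⬝ᵥ (A *ᵥ (x (k + 1) - x k)))
          - α * ((u (k + 1) - us) ⬝ᵥ (A *ᵥ (x (k + 1) - xs))) := by
      simp only [dotProduct_sub, dotProduct_smul, smul_eq_mul]
    have hfin : 0 ≤ α * ((u (k + 1) - us) ⬝ᵥ (Y - (A *ᵥ xs - b))) :=
      mul_nonneg hα.le hmono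
    nlinarith [hexp, hexp2, hscal, hcomb, hfin]
  -- conclude via the quadratic expansion
  have hexpand := Dsq_sub_expand A α M hMsymm (x (k + 1) - xs) (x (k + 1) - x k)
    (u (k + 1) - us) (u (k + 1) - u k)
  rw [show x k - xs = (x (k + 1) - xs) - (x (k + 1) - x k) from by abel,
    show u k - us = (u (k + 1) - us) - (u (k + 1) - u k) from by abel]
  linarith [hB, hexpand]
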